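/- Let S, I : [0,∞) → ℝ be differentiable functions satisfying S'(t) = −β S(t) I(t) and I'(t) = β S(t) I(t) − γ I(t) for all t ≥ 0, with S(0) = x ≥ 0 and I(0) = y ≥ 0. Then for every t ≥ 0 one has S(t) ≥ 0, I(t) ≥ 0 and S(t) + I(t) ≤ x + y; moreover if x > 0 then S(t) > 0 for all t ≥ 0, and if y > 0 then I(t) > 0 for all t ≥ 0. -/

import Mathlib

open Set Filter

/-- An SIR solution with parameters β, γ and initial data (x, y):
differentiable functions S, I on [0,∞) with S' = -βSI, I' = βSI - γI,
S(0) = x, I(0) = y. -/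
def IsSIRSolution (β γ x y : ℝ) (S I : ℝ → ℝ) : Prop :=
  S 0 = x ∧ I 0 = y ∧
  ∀ t, 0 ≤ t →
    HasDerivWithinAt S (-(β * S t * I t)) (Set.Ici 0) t ∧
    HasDerivWithinAt I (β * S t * I t - γ * I t) (Set.Ici 0) t

/-- If `f` solves `f' = a·f` on `[0,∞)` (with `a` continuous on all of `ℝ`), then
`f T = f 0 · exp(∫₀ᵀ a)`. -/
lemma linear_ode_aux (a f : ℝ → ℝ) (ha : Continuous a)
    (hf : ∀ t, 0 ≤ t → HasDerivWithinAt f (a t * f t) (Set.Ici 0) t)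
    (T : ℝ) (hT : 0 ≤ T) :
    f T = f 0 * Real.exp (∫ s in (0:ℝ)..T, a s) := by
  set F : ℝ → ℝ := fun u => ∫ s in (0:ℝ)..u, a s with hFdef
  have hF' : ∀ t : ℝ, HasDerivAt F (a t) t := fun t =>
    (ha.integral_hasStrictDerivAt 0 t).hasDerivAt
  have hFcont : Continuous F := by
    rw [continuous_iff_continuousAt]
    exact fun t => (hF' t).continuousAt
  have hfc : ContinuousOn f (Set.Icc 0 T) := fun t ht =>
    ((hf t ht.1).continuousWithinAt.mono (fun u hu => hu.1 : Set.Icc (0:ℝ) T ⊆ Set.Ici 0))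
  set G : ℝ → ℝ := fun u => f u * Real.exp (-F u) with hGdef
  have hGcont : ContinuousOn G (Set.Icc 0 T) :=
    hfc.mul ((Real.continuous_exp.comp hFcont.neg).continuousOn)
  have hG' : ∀ t ∈ Set.Ico 0 T, HasDerivWithinAt G 0 (Set.Ici t) t := by
    intro t ht
    have hsub : Set.Ici t ⊆ Set.Ici (0:ℝ) := Set.Ici_subset_Ici.2 ht.1
    have h1 : HasDerivWithinAt f (a t * f t) (Set.Ici t) t := (hf t ht.1).mono hsub
    have h2 : HasDerivWithinAt (fun u => Real.exp (-F u)) (Real.exp (-F t) * (-a t))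
        (Set.Ici t) t := ((hF' t).hasDerivWithinAt.neg).exp
    have := h1.mul h2
    exact this.congr_deriv (by ring)
  have hGeq := constant_of_has_deriv_right_zero hGcont hG' T (Set.right_mem_Icc.2 hT)
  have hF0 : F 0 = 0 := by simp [hFdef]
  have : f T * Real.exp (-F T) = f 0 := by
    simpa [hGdef, hF0] using hGeq
  have hexp : Real.exp (-F T) ≠ 0 := (Real.exp_pos _).ne'
  have : f T = f 0 / Real.exp (-F T) := by
    field_simp at this ⊢
    linarith [this]
  rw [this, Real.exp_neg]
  field_simp
  rfl

theorem stmt_0 (β γ x y : ℝ) (hβ : 0 < β) (hγ : 0 < γ) (hx : 0 ≤ x) (hy : 0 ≤ y)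
    (S I : ℝ → ℝ) (hSI : IsSIRSolution β γ x y S I) :
    (∀ t, 0 ≤ t → 0 ≤ S t ∧ 0 ≤ I t ∧ S t + I t ≤ x + y) ∧
    (0 < x → ∀ t, 0 ≤ t → 0 < S t) ∧
    (0 < y → ∀ t, 0 ≤ t → 0 < I t) := by
  obtain ⟨hS0, hI0, hderiv⟩ := hSI
  -- continuity of S, I on Ici 0
  have hScont : ContinuousOn S (Set.Ici 0) := fun t ht => (hderiv t ht).1.continuousWithinAt
  have hIcont : ContinuousOn I (Set.Ici 0) := fun t ht => (hderiv t ht).2.continuousWithinAt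
  -- continuous extensions via max
  have hmax : Continuous fun u : ℝ => max u 0 := continuous_id.max continuous_const
  have hmax_mem : ∀ u : ℝ, max u 0 ∈ Set.Ici (0:ℝ) := fun u => le_max_right u 0
  have hSe : Continuous fun u => S (max u 0) := by
    rw [continuous_iff_continuousAt]
    intro t
    have := ContinuousWithinAt.comp (f := fun u : ℝ => max u 0) (g := S) (s := Set.univ)
      (hScont (max t 0) (hmax_mem t)) hmax.continuousAt.continuousWithinAt
      (fun u _ => hmax_mem u)
    rwa [continuousWithinAt_univ] at this
  have hIe : Continuous fun u => I (max u 0) := by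
    rw [continuous_iff_continuousAt]
    intro t
    have := ContinuousWithinAt.comp (f := fun u : ℝ => max u 0) (g := I) (s := Set.univ)
      (hIcont (max t 0) (hmax_mem t)) hmax.continuousAt.continuousWithinAt
      (fun u _ => hmax_mem u)
    rwa [continuousWithinAt_univ] at this
  -- S formula
  have hSformula : ∀ T, 0 ≤ T →
      S T = x * Real.exp (∫ s in (0:ℝ)..T, -(β * I (max s 0))) := by
    intro T hT
    have := linear_ode_aux (fun u => -(β * I (max u 0))) S
      ((continuous_const.mul hIe).neg) ?_ T hT
    · rwa [hS0] at this
    · intro t ht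
      have : max t 0 = t := max_eq_left ht
      convert (hderiv t ht).1 using 1
      simp only [this]; ring
  have hIformula : ∀ T, 0 ≤ T →
      I T = y * Real.exp (∫ s in (0:ℝ)..T, (β * S (max s 0) - γ)) := by
    intro T hT
    have := linear_ode_aux (fun u => β * S (max u 0) - γ) I
      ((continuous_const.mul hSe).sub continuous_const) ?_ T hT
    · rwa [hI0] at this
    · intro t ht
      have : max t 0 = t := max_eq_left ht
      convert (hderiv t ht).2 using 1
      simp only [this]; ring
  have hSnn : ∀ t, 0 ≤ t → 0 ≤ S t := fun t ht => by
    rw [hSformula t ht]; exact mul_nonneg hx (Real.exp_pos _).le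
  have hInn : ∀ t, 0 ≤ t → 0 ≤ I t := fun t ht => by
    rw [hIformula t ht]; exact mul_nonneg hy (Real.exp_pos _).le
  -- S + I antitone
  have hanti : AntitoneOn (fun t => S t + I t) (Set.Ici 0) := by
    apply antitoneOn_of_hasDerivWithinAt_nonpos (f' := fun t => -(γ * I t))
      (convex_Ici 0) ((hScont.add hIcont))
    · intro t ht
      rw [interior_Ici] at ht ⊢
      have h1 : HasDerivAt S (-(β * S t * I t)) t :=
        (hderiv t (le_of_lt ht)).1.hasDerivAt (Ici_mem_nhds ht)
      have h2 : HasDerivAt I (β * S t * I t - γ * I t) t :=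
        (hderiv t (le_of_lt ht)).2.hasDerivAt (Ici_mem_nhds ht)
      have := (h1.add h2).hasDerivWithinAt (s := Set.Ioi 0)
      exact this.congr_deriv (by ring)
    · intro t ht
      rw [interior_Ici] at ht
      have := hInn t (le_of_lt ht)
      nlinarith
  refine ⟨fun t ht => ⟨hSnn t ht, hInn t ht, ?_⟩, fun hx' t ht => ?_, fun hy' t ht => ?_⟩
  · have := hanti (Set.self_mem_Ici) ht ht
    simpa [hS0, hI0] using this
  · rw [hSformula t ht]; exact mul_pos hx' (Real.exp_pos _)
  · rw [hIformula t ht]; exact mul_pos hy' (Real.exp_pos _)
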